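/- Fix a real η. For γ ∈ (0, 1/10], define p(γ) = (6γ + 4γ²)/(1 + 6γ), q(γ) = (4γ − 8γ²)/(1 + 6γ), s(γ) = (1/2 + 4γ + 6γ²)/(1 − 4γ²), and δ(γ) = ln( s(γ)/(1 − s(γ)) ). Then, as γ → 0⁺, ( p(γ)·(1 − η) + q(γ) ) / ( δ(γ)·(1 − p(γ)) ) → (5 − 3η)/8. -/

import Mathlib

open Filter

theorem finite_precision_welfare_ratio_limit (η : ℝ) :
    let p : ℝ → ℝ := fun γ => (6 * γ + 4 * γ ^ 2) / (1 + 6 * γ)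
    let q : ℝ → ℝ := fun γ => (4 * γ - 8 * γ ^ 2) / (1 + 6 * γ)
    let s : ℝ → ℝ := fun γ => (1/2 + 4 * γ + 6 * γ ^ 2) / (1 - 4 * γ ^ 2)
    let δ : ℝ → ℝ := fun γ => Real.log (s γ / (1 - s γ))
    Tendsto (fun γ => (p γ * (1 - η) + q γ) / (δ γ * (1 - p γ)))
      (nhdsWithin 0 (Set.Ioc (0:ℝ) (1/10))) (nhds ((5 - 3 * η) / 8)) := by
  intro p q s δ
  set l : Filter ℝ := nhdsWithin 0 (Set.Ioc (0:ℝ) (1/10)) with hl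
  set u : ℝ → ℝ := fun γ => (16 * γ + 32 * γ ^ 2) / (1 - 8 * γ - 20 * γ ^ 2) with hu
  -- eventual smallness
  have hev : ∀ᶠ γ in l, γ ∈ Set.Ioo (0:ℝ) (1/100) := by
    have h1 : ∀ᶠ γ in l, γ ∈ Set.Ioc (0:ℝ) (1/10) := eventually_mem_nhdsWithin
    have h2 : ∀ᶠ γ : ℝ in nhds 0, |γ - 0| < 1/100 :=
      eventually_abs_sub_lt 0 (by norm_num)
    have h2' : ∀ᶠ γ in l, |γ - 0| < 1/100 := h2.filter_mono nhdsWithin_le_nhds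
    filter_upwards [h1, h2'] with γ hγ1 hγ2
    refine ⟨hγ1.1, ?_⟩
    have := abs_lt.mp hγ2
    linarith [this.2]
  -- derivative of log(1+x) at 0
  have hderiv : HasDerivAt (fun x : ℝ => Real.log (1 + x)) 1 0 := by
    have h := (Real.hasDerivAt_log (by norm_num : (1:ℝ) + 0 ≠ 0)).comp 0
      ((hasDerivAt_id (0:ℝ)).const_add 1)
    simp at h
    exact h
  have L : Tendsto (fun y : ℝ => Real.log (1 + y) / y) (nhdsWithin 0 {(0:ℝ)}ᶜ) (nhds 1) := by
    have h := hasDerivAt_iff_tendsto_slope.mp hderiv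
    refine h.congr (fun y => ?_)
    simp [slope_fun_def, Real.log_one, div_eq_inv_mul]
  -- u tends to 0 within punctured nbhd
  have hu0 : Tendsto u l (nhdsWithin 0 {(0:ℝ)}ᶜ) := by
    rw [tendsto_nhdsWithin_iff]
    constructor
    · have hc : ContinuousAt u 0 := by
        apply ContinuousAt.div
        · fun_prop
        · fun_prop
        · norm_num
      have h2 : Tendsto u l (nhds (u 0)) := hc.tendsto.mono_left nhdsWithin_le_nhds
      simpa [hu] using h2
    · filter_upwards [hev] with γ hγ
      obtain ⟨h0, h1⟩ := hγ
      have hd : (0:ℝ) < 1 - 8 * γ - 20 * γ ^ 2 := by nlinarith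
      have hn : (0:ℝ) < 16 * γ + 32 * γ ^ 2 := by nlinarith
      have : 0 < u γ := div_pos hn hd
      simpa using ne_of_gt this
  have hlog : Tendsto (fun γ => Real.log (1 + u γ) / u γ) l (nhds 1) := L.comp hu0
  -- u γ / γ tends to 16
  have hU : Tendsto (fun γ => (16 + 32 * γ) / (1 - 8 * γ - 20 * γ ^ 2)) l (nhds 16) := by
    have hc : ContinuousAt (fun γ : ℝ => (16 + 32 * γ) / (1 - 8 * γ - 20 * γ ^ 2)) 0 := by
      apply ContinuousAt.div
      · fun_prop
      · fun_prop
      · norm_num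
    have h2 := hc.tendsto.mono_left (nhdsWithin_le_nhds (s := Set.Ioc (0:ℝ) (1/10)))
    have h3 : (16 + 32 * (0:ℝ)) / (1 - 8 * 0 - 20 * 0 ^ 2) = 16 := by norm_num
    rw [h3] at h2
    exact h2
  -- δ γ / γ tends to 16
  have hδ : Tendsto (fun γ => δ γ / γ) l (nhds 16) := by
    have hmul : Tendsto (fun γ => (Real.log (1 + u γ) / u γ) *
        ((16 + 32 * γ) / (1 - 8 * γ - 20 * γ ^ 2))) l (nhds (1 * 16)) := hlog.mul hU
    rw [one_mul] at hmul
    refine hmul.congr' ?_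
    filter_upwards [hev] with γ hγ
    obtain ⟨h0, h1⟩ := hγ
    have hγne : γ ≠ 0 := ne_of_gt h0
    have hd : (0:ℝ) < 1 - 8 * γ - 20 * γ ^ 2 := by nlinarith
    have hd4 : (0:ℝ) < 1 - 4 * γ ^ 2 := by nlinarith
    have hn : (0:ℝ) < 16 * γ + 32 * γ ^ 2 := by nlinarith
    have huγ : u γ ≠ 0 := ne_of_gt (div_pos hn hd)
    have hs : s γ / (1 - s γ) = 1 + u γ := by
      show (1/2 + 4 * γ + 6 * γ ^ 2) / (1 - 4 * γ ^ 2) /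
        (1 - (1/2 + 4 * γ + 6 * γ ^ 2) / (1 - 4 * γ ^ 2)) = 1 + u γ
      rw [hu]
      have h1s : 1 - (1/2 + 4 * γ + 6 * γ ^ 2) / (1 - 4 * γ ^ 2)
          = (1/2 - 4 * γ - 10 * γ ^ 2) / (1 - 4 * γ ^ 2) := by
        field_simp
        ring
      rw [h1s, div_div_div_cancel_right₀ hd4.ne']
      have hd2 : (0:ℝ) < 1/2 - 4 * γ - 10 * γ ^ 2 := by nlinarith
      rw [show (fun γ => (16 * γ + 32 * γ ^ 2) / (1 - 8 * γ - 20 * γ ^ 2)) γ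
          = (16 * γ + 32 * γ ^ 2) / (1 - 8 * γ - 20 * γ ^ 2) from rfl]
      rw [add_div' _ _ _ hd.ne', div_eq_div_iff hd2.ne' hd.ne']
      ring
    have huu : u γ / γ = (16 + 32 * γ) / (1 - 8 * γ - 20 * γ ^ 2) := by
      rw [hu]
      field_simp
    show Real.log (1 + u γ) / u γ * ((16 + 32 * γ) / (1 - 8 * γ - 20 * γ ^ 2)) = δ γ / γ
    rw [← huu]
    show _ = Real.log (s γ / (1 - s γ)) / γ
    rw [hs]
    field_simp
  -- numerator / γ tends to 10 - 6η
  have hN : Tendsto (fun γ => (p γ * (1 - η) + q γ) / γ) l (nhds (10 - 6 * η)) := by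
    have hc : ContinuousAt (fun γ : ℝ => ((6 + 4 * γ) * (1 - η) + (4 - 8 * γ)) / (1 + 6 * γ)) 0 := by
      apply ContinuousAt.div
      · fun_prop
      · fun_prop
      · norm_num
    have h0 : Tendsto (fun γ : ℝ => ((6 + 4 * γ) * (1 - η) + (4 - 8 * γ)) / (1 + 6 * γ)) l
        (nhds (10 - 6 * η)) := by
      have h2 := hc.tendsto.mono_left (nhdsWithin_le_nhds (s := Set.Ioc (0:ℝ) (1/10)))
      have he : ((6 + 4 * (0:ℝ)) * (1 - η) + (4 - 8 * 0)) / (1 + 6 * 0) = 10 - 6 * η := by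
        norm_num; ring
      rw [he] at h2
      exact h2
    refine h0.congr' ?_
    filter_upwards [hev] with γ hγ
    obtain ⟨h0', h1⟩ := hγ
    have hγne : γ ≠ 0 := ne_of_gt h0'
    have hdne : (1:ℝ) + 6 * γ ≠ 0 := by positivity
    show ((6 + 4 * γ) * (1 - η) + (4 - 8 * γ)) / (1 + 6 * γ) = (p γ * (1 - η) + q γ) / γ
    show _ = ((6 * γ + 4 * γ ^ 2) / (1 + 6 * γ) * (1 - η) + (4 * γ - 8 * γ ^ 2) / (1 + 6 * γ)) / γ
    field_simp
  -- 1 - p tends to 1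
  have hP : Tendsto (fun γ => 1 - p γ) l (nhds 1) := by
    have hc : ContinuousAt (fun γ : ℝ => 1 - (6 * γ + 4 * γ ^ 2) / (1 + 6 * γ)) 0 := by
      apply ContinuousAt.sub
      · fun_prop
      · apply ContinuousAt.div
        · fun_prop
        · fun_prop
        · norm_num
    have h2 := hc.tendsto.mono_left (nhdsWithin_le_nhds (s := Set.Ioc (0:ℝ) (1/10)))
    have h3 : 1 - (6 * (0:ℝ) + 4 * 0 ^ 2) / (1 + 6 * 0) = 1 := by norm_num
    rw [h3] at h2
    exact h2
  -- combine
  have hfinal : Tendsto (fun γ => ((p γ * (1 - η) + q γ) / γ) / ((δ γ / γ) * (1 - p γ))) l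
      (nhds ((10 - 6 * η) / (16 * 1))) := hN.div (hδ.mul hP) (by norm_num)
  have heq : (10 - 6 * η) / (16 * 1) = (5 - 3 * η) / 8 := by ring
  rw [heq] at hfinal
  refine hfinal.congr' ?_
  filter_upwards [hev] with γ hγ
  have hγne : γ ≠ 0 := ne_of_gt hγ.1
  show ((p γ * (1 - η) + q γ) / γ) / ((δ γ / γ) * (1 - p γ))
      = (p γ * (1 - η) + q γ) / (δ γ * (1 - p γ))
  rw [div_div]
  congr 1
  field_simp
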